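/- Let $(\varphi^k)_{k\in\mathbb{N}}$, $(\delta_k)_{k\in\mathbb{N}}$, $(\alpha_k)_{k\in\mathbb{N}}$ be sequences in $[0,+\infty)$ such that $\varphi^{k+1} \le \varphi^k + \alpha_k(\varphi^k - \varphi^{k-1}) + \delta_k$ for all $k \ge 1$, $\sum_{k} \delta_k < +\infty$, and there exists $\alpha$ with $0 \le \alpha_k \le \alpha < 1$ for all $k$. Then $\sum_{k\ge 1} \max(\varphi^k - \varphi^{k-1}, 0) < +\infty$. -/

import Mathlib

theorem stmt_0 (φ δ α : ℕ → ℝ)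
    (hφ : ∀ k, 0 ≤ φ k) (hδ : ∀ k, 0 ≤ δ k) (hα : ∀ k, 0 ≤ α k)
    (hrec : ∀ k, 1 ≤ k → φ (k + 1) ≤ φ k + α k * (φ k - φ (k - 1)) + δ k)
    (hsum : Summable δ)
    (a : ℝ) (ha : ∀ k, α k ≤ a) (ha1 : a < 1) :
    Summable (fun k : ℕ => max (φ (k + 1) - φ k) 0) := by
  set θ : ℕ → ℝ := fun k => max (φ (k + 1) - φ k) 0 with hθ
  have ha0 : 0 ≤ a := le_trans (hα 0) (ha 0)
  have hθ0 : ∀ k, 0 ≤ θ k := fun k => le_max_right _ _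
  have key : ∀ k, θ (k + 1) ≤ a * θ k + δ (k + 1) := by
    intro k
    have h := hrec (k + 1) (by omega)
    simp only [Nat.add_sub_cancel] at h
    have h2 : φ (k + 1 + 1) - φ (k + 1) ≤ a * θ k + δ (k + 1) := by
      have : α (k + 1) * (φ (k + 1) - φ k) ≤ a * θ k := by
        rcases le_or_gt 0 (φ (k + 1) - φ k) with hx | hx
        · have : θ k = φ (k + 1) - φ k := max_eq_left hx
          rw [this]
          exact mul_le_mul (ha _) le_rfl hx ha0
        · have h1 : α (k + 1) * (φ (k + 1) - φ k) ≤ 0 :=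
            mul_nonpos_of_nonneg_of_nonpos (hα _) hx.le
          exact h1.trans (mul_nonneg ha0 (hθ0 k))
      linarith
    have hr : 0 ≤ a * θ k + δ (k + 1) := add_nonneg (mul_nonneg ha0 (hθ0 k)) (hδ _)
    exact max_le h2 hr
  have hD : ∀ n, ∑ k ∈ Finset.range n, δ (k + 1) ≤ ∑' k, δ k := by
    intro n
    calc ∑ k ∈ Finset.range n, δ (k + 1)
        ≤ ∑ k ∈ Finset.range (n + 1), δ k := by
          rw [Finset.sum_range_succ']
          linarith [hδ 0]
      _ ≤ ∑' k, δ k := Summable.sum_le_tsum _ (fun i _ => hδ i) hsum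
  set C : ℝ := (θ 0 + ∑' k, δ k) / (1 - a) with hC
  have hbound : ∀ n, ∑ k ∈ Finset.range n, θ k ≤ C := by
    intro n
    have hCn : 0 ≤ C := by
      apply div_nonneg _ (by linarith)
      have : 0 ≤ ∑' k, δ k := tsum_nonneg hδ
      linarith [hθ0 0]
    cases n with
    | zero => simpa using hCn
    | succ m =>
      have hS : ∑ k ∈ Finset.range (m + 1), θ k
          ≤ θ 0 + a * ∑ k ∈ Finset.range (m + 1), θ k + ∑' k, δ k := by
        have : ∑ k ∈ Finset.range (m + 1), θ k
            = θ 0 + ∑ k ∈ Finset.range m, θ (k + 1) := by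
          rw [Finset.sum_range_succ']
          ring
        rw [this]
        have h1 : ∑ k ∈ Finset.range m, θ (k + 1)
            ≤ ∑ k ∈ Finset.range m, (a * θ k + δ (k + 1)) :=
          Finset.sum_le_sum fun i _ => key i
        have h2 : ∑ k ∈ Finset.range m, (a * θ k + δ (k + 1))
            = a * ∑ k ∈ Finset.range m, θ k + ∑ k ∈ Finset.range m, δ (k + 1) := by
          rw [Finset.sum_add_distrib, Finset.mul_sum]
        have h3 : a * ∑ k ∈ Finset.range m, θ k
            ≤ a * ∑ k ∈ Finset.range (m + 1), θ k := by
          apply mul_le_mul_of_nonneg_left _ ha0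
          exact Finset.sum_le_sum_of_subset_of_nonneg
            (Finset.range_subset_range.2 (Nat.le_succ m)) (fun i _ _ => hθ0 i)
        rw [this] at h3
        have h4 := hD m
        linarith
      have h1a : 0 < 1 - a := by linarith
      rw [hC, le_div_iff₀ h1a]
      nlinarith [hS]
  exact summable_of_sum_range_le hθ0 hbound
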